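/- Let p be a prime, m ≥ 1, d = 2^l and k = 2^m powers of 2, and suppose i₀, i₁, …, i_{m-1} ≥ 0 are integers with i₀ ≤ d − 2 and (2^m − 2^0)i₀ + (2^m − 2^1)i₁ + ⋯ + (2^m − 2^{m-1})i_{m-1} = (d−1)(k−1). Then the multinomial coefficient (i₀ + i₁ + ⋯ + i_{m-1})! / (i₀! i₁! ⋯ i_{m-1}!) is even. -/

import Mathlib

/-- If the binary digit of `k` at position `s` is `1` but that of `n` is `0`,
then `n.choose k` is even (Lucas' theorem). -/
lemma even_choose_of_bit {n k s : ℕ} (hn : n / 2 ^ s % 2 = 0) (hk : k / 2 ^ s % 2 = 1) :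
    2 ∣ n.choose k := by
  haveI : Fact (Nat.Prime 2) := ⟨Nat.prime_two⟩
  have h := Choose.choose_modEq_choose_mul_prod_range_choose (p := 2) (n := n) (k := k) (s + 1)
  have hprod : (∏ j ∈ Finset.range (s + 1), (n / 2 ^ j % 2).choose (k / 2 ^ j % 2)) = 0 := by
    refine Finset.prod_eq_zero (Finset.self_mem_range_succ s) ?_
    rw [hn, hk]
    decide
  rw [hprod] at h
  have h0 : ((n.choose k : ℤ)) ≡ 0 [ZMOD (2 : ℕ)] := by simpa using h
  have : ((2 : ℕ) : ℤ) ∣ (n.choose k : ℤ) := (Int.modEq_zero_iff_dvd).mp h0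
  exact_mod_cast this

/-- The binomial coefficient on two of the entries divides the multinomial coefficient. -/
lemma choose_dvd_multinomial {α : Type*} [DecidableEq α] (s : Finset α) (f : α → ℕ)
    {a b : α} (ha : a ∈ s) (hb : b ∈ s) (hab : a ≠ b) :
    (f a + f b).choose (f a) ∣ Nat.multinomial s f := by
  have hb' : b ∈ s.erase a := Finset.mem_erase.2 ⟨fun h => hab h.symm, hb⟩
  have hbe : s.erase a = insert b ((s.erase a).erase b) := (Finset.insert_erase hb').symm
  have hae : s = insert a (s.erase a) := (Finset.insert_erase ha).symm
  have hanotin : a ∉ s.erase a := Finset.notMem_erase a s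
  have hbnotin : b ∉ (s.erase a).erase b := Finset.notMem_erase b _
  set T := ∑ x ∈ (s.erase a).erase b, f x with hT
  have h1 : Nat.multinomial s f
      = (f a + ∑ x ∈ s.erase a, f x).choose (f a) * Nat.multinomial (s.erase a) f := by
    conv_lhs => rw [hae]
    rw [Nat.multinomial_insert hanotin]
  have h2 : Nat.multinomial (s.erase a) f
      = (f b + T).choose (f b) * Nat.multinomial ((s.erase a).erase b) f := by
    conv_lhs => rw [hbe]
    rw [Nat.multinomial_insert hbnotin]
  have h3 : ∑ x ∈ s.erase a, f x = f b + T := by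
    conv_lhs => rw [hbe]
    rw [Finset.sum_insert hbnotin]
  have key : (f a + (f b + T)).choose (f a) * (f b + T).choose (f b) =
      (f a + f b + T).choose (f a + f b) * (f a + f b).choose (f a) := by
    have hassoc : f a + (f b + T) = f a + f b + T := (add_assoc _ _ _).symm
    rw [hassoc]
    have hmul := Nat.choose_mul (n := f a + f b + T) (k := f a + f b) (s := f a)
      (Nat.le_add_right _ _)
    have e1 : f a + f b + T - f a = f b + T := by omega
    have e2 : f a + f b - f a = f b := by omega
    rw [e1, e2] at hmul
    exact hmul.symm
  rw [h1, h3, h2, ← mul_assoc, key]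
  exact Dvd.dvd.mul_right (dvd_mul_left _ _) _

/-- Let `p` be a prime, `m ≥ 1`, `d = 2^l` and `k = 2^m` powers of `2`, and
suppose `i₀, …, i_{m-1} ≥ 0` are integers with `i₀ ≤ d - 2` and
`(2^m − 2^0)·i₀ + (2^m − 2^1)·i₁ + ⋯ + (2^m − 2^{m-1})·i_{m-1} = (d−1)(k−1)`.
Then the multinomial coefficient `(i₀ + ⋯ + i_{m-1})! / (i₀! ⋯ i_{m-1}!)` is even. -/
theorem stmt_13 (p : ℕ) (hp : p.Prime) (l m : ℕ) (hl : 1 ≤ l) (hm : 1 ≤ m)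
    (i : Fin m → ℕ) (h0 : i ⟨0, by omega⟩ ≤ 2 ^ l - 2)
    (hsum : ∑ b : Fin m, (2 ^ m - 2 ^ (b : ℕ)) * i b = (2 ^ l - 1) * (2 ^ m - 1)) :
    2 ∣ Nat.multinomial Finset.univ i := by
  set e0 : Fin m := ⟨0, by omega⟩ with he0
  have he0v : ((e0 : Fin m) : ℕ) = 0 := rfl
  set E : Finset (Fin m) := Finset.univ.erase e0 with hE
  have hEb : ∀ b ∈ E, 1 ≤ (b : ℕ) := by
    intro b hbE
    have hbne : b ≠ e0 := (Finset.mem_erase.1 hbE).1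
    rcases Nat.eq_zero_or_pos (b : ℕ) with h | h
    · exact absurd (Fin.ext (h.trans he0v.symm)) hbne
    · exact h
  have hbm : ∀ b : Fin m, 2 ^ (b : ℕ) ≤ 2 ^ m :=
    fun b => Nat.pow_le_pow_right (by norm_num) (le_of_lt b.isLt)
  have h2l1 : 1 ≤ 2 ^ l := Nat.one_le_two_pow
  have h2m1 : 1 ≤ 2 ^ m := Nat.one_le_two_pow
  have h2l2 : 2 ≤ 2 ^ l := by
    have : 1 < 2 ^ l := Nat.one_lt_two_pow_iff.mpr (by omega)
    omega
  -- split the sum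
  have hsplit : (2 ^ m - 1) * i e0 + ∑ b ∈ E, (2 ^ m - 2 ^ (b : ℕ)) * i b
      = (2 ^ l - 1) * (2 ^ m - 1) := by
    rw [← hsum, ← Finset.add_sum_erase _ _ (Finset.mem_univ e0)]
    rw [he0v, pow_zero]
  -- i e0 is odd
  have hi0odd : i e0 % 2 = 1 := by
    have hEeven : 2 ∣ ∑ b ∈ E, (2 ^ m - 2 ^ (b : ℕ)) * i b := by
      refine Finset.dvd_sum fun b hbE => Dvd.dvd.mul_right ?_ _
      have h1 : 1 ≤ (b : ℕ) := hEb b hbE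
      have h2 : (2 : ℕ) ∣ 2 ^ (b : ℕ) := dvd_pow_self 2 (by omega)
      have h3 : (2 : ℕ) ∣ 2 ^ m := dvd_pow_self 2 (by omega)
      exact Nat.dvd_sub h3 h2
    have hrhsodd : ((2 ^ l - 1) * (2 ^ m - 1)) % 2 = 1 := by
      have hd1 : (2:ℕ) ∣ 2 ^ l := dvd_pow_self 2 (by omega)
      have hd2 : (2:ℕ) ∣ 2 ^ m := dvd_pow_self 2 (by omega)
      have h1 : (2 ^ l - 1) % 2 = 1 := by omega
      have h2 : (2 ^ m - 1) % 2 = 1 := by omega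
      exact Nat.odd_mul_odd h1 h2
    by_contra h
    have hi0even : 2 ∣ i e0 := by omega
    have : 2 ∣ (2 ^ m - 1) * i e0 := Dvd.dvd.mul_left hi0even _
    omega
  -- define t with i e0 + 1 = 2^t * a, a odd
  obtain ⟨t, a, hanot, hta⟩ := Nat.exists_eq_pow_mul_and_not_dvd
    (n := i e0 + 1) (by omega) 2 (by norm_num)
  have haodd : a % 2 = 1 := by omega
  have ht1 : 1 ≤ t := by
    by_contra h
    interval_cases t
    simp at hta
    omega
  have htl : t < l := by
    have h1 : 2 ^ t ≤ 2 ^ t * a := Nat.le_mul_of_pos_right _ (by omega)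
    have h3 : 2 ^ t < 2 ^ l := by omega
    exact (Nat.pow_lt_pow_iff_right (by norm_num)).1 h3
  by_cases hcase : ∀ b ∈ E, 2 ^ t ∣ i b
  · -- all i_b divisible by 2^t : contradiction
    exfalso
    have hkey : ∑ b : Fin m, (2 ^ m - 2 ^ (b : ℕ)) * i b + ∑ b : Fin m, 2 ^ (b : ℕ) * i b
        = ∑ b : Fin m, 2 ^ m * i b := by
      rw [← Finset.sum_add_distrib]
      refine Finset.sum_congr rfl fun b _ => ?_
      have := hbm b
      rw [← Nat.add_mul]
      congr 1
      omega
    obtain ⟨S, hS⟩ : ∃ S, S = ∑ b : Fin m, i b := ⟨_, rfl⟩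
    obtain ⟨N, hN⟩ : ∃ N, N = ∑ b : Fin m, 2 ^ (b : ℕ) * i b := ⟨_, rfl⟩
    have h1 : 2 ^ m * S = (2 ^ l - 1) * (2 ^ m - 1) + N := by
      rw [hS, Finset.mul_sum, hN]
      omega
    have haux : (2 ^ l - 1) * (2 ^ m - 1) + 2 ^ m = 2 ^ l * (2 ^ m - 1) + 1 := by
      zify [h2l1, h2m1]
      ring
    have h2 : 2 ^ m * (S + 1) = (N + 1) + 2 ^ l * (2 ^ m - 1) := by
      have hh : 2 ^ m * (S + 1) = 2 ^ m * S + 2 ^ m := by ring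
      omega
    -- divisibilities
    have hSsplit : S = i e0 + ∑ b ∈ E, i b := by
      rw [hS, ← Finset.add_sum_erase _ _ (Finset.mem_univ e0)]
    have hSdvd : 2 ^ t ∣ S + 1 := by
      have hh : S + 1 = 2 ^ t * a + ∑ b ∈ E, i b := by omega
      rw [hh]
      exact Nat.dvd_add (Dvd.intro _ rfl) (Finset.dvd_sum fun b hb => hcase b hb)
    have hd1 : 2 ^ (t + 1) ∣ 2 ^ m * (S + 1) := by
      obtain ⟨X, hX⟩ := hSdvd
      obtain ⟨Y, hY⟩ : (2:ℕ) ∣ 2 ^ m := dvd_pow_self 2 (by omega)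
      refine ⟨Y * X, ?_⟩
      rw [hX, hY, pow_succ]
      ring
    have hd2 : 2 ^ (t + 1) ∣ 2 ^ l * (2 ^ m - 1) :=
      Dvd.dvd.mul_right (pow_dvd_pow 2 (by omega)) _
    have hd3 : 2 ^ (t + 1) ∣ N + 1 := by
      have h' : 2 ^ (t + 1) ∣ (N + 1) + 2 ^ l * (2 ^ m - 1) := by rw [← h2]; exact hd1
      have hsub := Nat.dvd_sub h' hd2
      rwa [Nat.add_sub_cancel] at hsub
    have hNsplit : N = i e0 + ∑ b ∈ E, 2 ^ (b : ℕ) * i b := by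
      rw [hN, ← Finset.add_sum_erase _ _ (Finset.mem_univ e0), he0v, pow_zero, one_mul]
    have hd4 : 2 ^ (t + 1) ∣ ∑ b ∈ E, 2 ^ (b : ℕ) * i b := by
      refine Finset.dvd_sum fun b hbE => ?_
      have hb1 : 1 ≤ (b : ℕ) := hEb b hbE
      have hb2 : (2:ℕ) ∣ 2 ^ (b : ℕ) := dvd_pow_self 2 (by omega)
      rw [pow_succ, Nat.mul_comm (2 ^ t) 2]
      exact mul_dvd_mul hb2 (hcase b hbE)
    have hd5 : 2 ^ (t + 1) ∣ 2 ^ t * a := by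
      have h' : 2 ^ (t + 1) ∣ 2 ^ t * a + ∑ b ∈ E, 2 ^ (b : ℕ) * i b := by
        have hh : 2 ^ t * a + ∑ b ∈ E, 2 ^ (b : ℕ) * i b = N + 1 := by omega
        rw [hh]; exact hd3
      have hsub := Nat.dvd_sub h' hd4
      rwa [Nat.add_sub_cancel] at hsub
    obtain ⟨w, hw⟩ := hd5
    have hw' : 2 ^ t * a = 2 ^ t * (2 * w) := by rw [hw, pow_succ]; ring
    have haw : a = 2 * w := Nat.eq_of_mul_eq_mul_left (by positivity) hw'
    omega
  · -- some i_b not divisible by 2^t : binomial coefficient is even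
    push_neg at hcase
    obtain ⟨b, hbE, hbnd⟩ := hcase
    have hbne : i b ≠ 0 := fun h => hbnd (h ▸ dvd_zero _)
    obtain ⟨s, c, hcnot, hsc⟩ := Nat.exists_eq_pow_mul_and_not_dvd hbne 2 (by norm_num)
    have hcodd : c % 2 = 1 := by omega
    have hst : s < t := by
      by_contra h
      exact hbnd (hsc ▸ Dvd.dvd.mul_right (pow_dvd_pow 2 (by omega)) _)
    -- the bit of i b at position s is 1
    have hkbit : i b / 2 ^ s % 2 = 1 := by
      rw [hsc, Nat.mul_div_cancel_left _ (by positivity)]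
      exact hcodd
    -- the bit of (i e0 + i b) at position s is 0
    have hnbit : (i e0 + i b) / 2 ^ s % 2 = 0 := by
      obtain ⟨c', hc'⟩ : ∃ c', c = 2 * c' + 1 := ⟨c / 2, by omega⟩
      have htpow : (2:ℕ) ^ t = 2 ^ s * 2 * 2 ^ (t - s - 1) := by
        have : s + 1 + (t - s - 1) = t := by omega
        calc (2:ℕ) ^ t = 2 ^ (s + 1 + (t - s - 1)) := by rw [this]
          _ = 2 ^ s * 2 * 2 ^ (t - s - 1) := by rw [pow_add, pow_succ]
      set e : ℕ := 2 ^ (t - s - 1) * a + c' with he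
      have hn1 : i e0 + i b + 1 = 2 ^ s * (2 * e) + 2 ^ s := by
        have hh : i e0 + i b + 1 = 2 ^ t * a + 2 ^ s * c := by omega
        rw [hh, htpow, hc', he]
        ring
      have hps : 1 ≤ 2 ^ s := Nat.one_le_two_pow
      have hn2 : i e0 + i b = 2 ^ s - 1 + 2 ^ s * (2 * e) := by omega
      rw [hn2, Nat.add_mul_div_left _ _ (by positivity), Nat.div_eq_of_lt (by omega)]
      omega
    have heven : 2 ∣ (i e0 + i b).choose (i b) := even_choose_of_bit hnbit hkbit
    have hdvd : (i e0 + i b).choose (i e0) ∣ Nat.multinomial Finset.univ i :=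
      choose_dvd_multinomial Finset.univ i (Finset.mem_univ e0) (Finset.mem_univ b)
        (fun h => (Finset.mem_erase.1 hbE).1 h.symm)
    have hsymm : (i e0 + i b).choose (i e0) = (i e0 + i b).choose (i b) := by
      rw [← Nat.choose_symm (Nat.le_add_right _ _)]
      congr 1
      omega
    exact dvd_trans (hsymm ▸ heven) hdvd
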